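/- Let a : (0,1] → ℝ be C¹ with a > 0 on (0,1] satisfying x·|a'(x)| ≤ α·a(x) for some α ∈ [0,1), and let ψ ∈ H¹((0,1)) (complex-valued) with ψ(1) = 0. Then ∫_0^1 |ψ(τ)|² dτ ≤ (1 / (a(1)·(2−α))) · ∫_0^1 a(x)|ψ'(x)|² dx. -/

import Mathlib

open Real Set MeasureTheory intervalIntegral

lemma aux_lower_stmt5 (a a' : ℝ → ℝ) (α : ℝ)
    (hpos : ∀ x ∈ Ioc (0:ℝ) 1, 0 < a x)
    (haderiv : ∀ x ∈ Ioc (0:ℝ) 1, HasDerivAt a (a' x) x)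
    (hbound : ∀ x ∈ Ioc (0:ℝ) 1, x * |a' x| ≤ α * a x) :
    ∀ x ∈ Ioc (0:ℝ) 1, a 1 * x ^ α ≤ a x := by
  intro x hx
  set g : ℝ → ℝ := fun t => Real.log (a t) - α * Real.log t with hg
  have key : AntitoneOn g (Icc x 1) := by
    have hsub : Icc x 1 ⊆ Ioc (0:ℝ) 1 := fun t ht => ⟨lt_of_lt_of_le hx.1 ht.1, ht.2⟩
    have hd : ∀ t ∈ Ioc (0:ℝ) 1, HasDerivAt g (a' t / a t - α * (1/t)) t := by
      intro t ht
      exact ((haderiv t ht).log (hpos t ht).ne').sub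
        (((Real.hasDerivAt_log (ne_of_gt ht.1)).const_mul α).congr_deriv (by ring))
    refine antitoneOn_of_deriv_nonpos (convex_Icc x 1) ?_ ?_ ?_
    · intro t ht
      exact ((hd t (hsub ht)).continuousAt).continuousWithinAt
    · intro t ht
      rw [interior_Icc] at ht
      exact ((hd t (hsub (Ioo_subset_Icc_self ht))).differentiableAt).differentiableWithinAt
    · intro t ht
      rw [interior_Icc] at ht
      have ht' := hsub (Ioo_subset_Icc_self ht)
      rw [(hd t ht').deriv]
      have h1 : a' t ≤ α * a t / t := by
        have := hbound t ht'
        have h2 : a' t ≤ |a' t| := le_abs_self _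
        rw [le_div_iff₀ ht'.1]
        nlinarith [ht'.1, abs_nonneg (a' t)]
      have hat := hpos t ht'
      rw [sub_nonpos, div_le_iff₀ hat]
      calc a' t ≤ α * a t / t := h1
        _ = α * (1/t) * a t := by ring
  have h1 : g 1 ≤ g x := key ⟨le_refl x, hx.2⟩ ⟨hx.2, le_refl 1⟩ hx.2
  have hax := hpos x hx
  have ha1 := hpos 1 ⟨one_pos, le_refl 1⟩
  have hx0 := hx.1
  simp only [hg, Real.log_one, mul_zero, sub_zero] at h1
  have : Real.log (a 1 * x ^ α) ≤ Real.log (a x) := by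
    rw [Real.log_mul ha1.ne' (Real.rpow_pos_of_pos hx0 α).ne', Real.log_rpow hx0]
    linarith
  exact (Real.log_le_log_iff (by positivity) hax).mp this

/-- Hardy-type inequality: under (H2), for `ψ ∈ H¹(0,1)` with `ψ(1)=0`,
`∫_0^1 |ψ|² ≤ (1/(a(1)(2−α)))·∫_0^1 a|ψ'|²`. -/
theorem stmt5 (a a' : ℝ → ℝ) (α : ℝ)
    (hα0 : 0 ≤ α) (hα1 : α < 1)
    (hpos : ∀ x ∈ Ioc (0:ℝ) 1, 0 < a x)
    (haderiv : ∀ x ∈ Ioc (0:ℝ) 1, HasDerivAt a (a' x) x)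
    (hacont : ContinuousOn a' (Ioc (0:ℝ) 1))
    (hbound : ∀ x ∈ Ioc (0:ℝ) 1, x * |a' x| ≤ α * a x)
    (ψ ψ' : ℝ → ℂ)
    (hψ1 : ψ 1 = 0)
    (hderiv : ∀ x ∈ Ioo (0:ℝ) 1, HasDerivAt ψ (ψ' x) x)
    (hψ'int : IntegrableOn ψ' (Ioc (0:ℝ) 1))
    (hrep : ∀ τ ∈ Ioo (0:ℝ) 1, ψ τ = -∫ x in τ..1, ψ' x)
    (hL2 : IntegrableOn (fun x => a x * ‖ψ' x‖ ^ 2) (Ioc (0:ℝ) 1)) :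
    ∫ τ in Ioc (0:ℝ) 1, ‖ψ τ‖ ^ 2
      ≤ (1 / (a 1 * (2 - α))) * ∫ x in Ioc (0:ℝ) 1, a x * ‖ψ' x‖ ^ 2 := by
  have hlow := aux_lower_stmt5 a a' α hpos haderiv hbound
  have ha1 : 0 < a 1 := hpos 1 ⟨one_pos, le_refl 1⟩
  have h1α : (0:ℝ) < 1 - α := by linarith
  have h2α : (0:ℝ) < 2 - α := by linarith
  set E := ∫ x in Ioc (0:ℝ) 1, a x * ‖ψ' x‖ ^ 2 with hE
  have hE0 : 0 ≤ E := setIntegral_nonneg measurableSet_Ioc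
    (fun x hx => mul_nonneg (hpos x hx).le (by positivity))
  have hca : ContinuousOn a (Ioc (0:ℝ) 1) :=
    fun t ht => ((haderiv t ht).continuousAt).continuousWithinAt
  -- pointwise bound
  have key : ∀ τ ∈ Ioo (0:ℝ) 1,
      ‖ψ τ‖ ^ 2 ≤ (1 - τ ^ (1-α)) * ((1-α) * a 1)⁻¹ * E := by
    intro τ hτ
    have hτ1 : τ ≤ 1 := hτ.2.le
    have hsub : Ioc τ 1 ⊆ Ioc (0:ℝ) 1 := Ioc_subset_Ioc hτ.1.le le_rfl
    have hcaτ : ContinuousOn a (Icc τ 1) := hca.mono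
      (fun t ht => ⟨lt_of_lt_of_le hτ.1 ht.1, ht.2⟩)
    set μ := volume.restrict (Ioc τ 1) with hμ
    set f : ℝ → ℝ := fun x => (Real.sqrt (a x))⁻¹ with hf
    set g : ℝ → ℝ := fun x => Real.sqrt (a x) * ‖ψ' x‖ with hgdef
    -- integrability
    have hIa : IntegrableOn (fun x => (a x)⁻¹) (Ioc τ 1) := by
      refine ((hcaτ.inv₀ ?_).integrableOn_Icc).mono_set Ioc_subset_Icc_self
      exact fun t ht => (hpos t ⟨lt_of_lt_of_le hτ.1 ht.1, ht.2⟩).ne'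
    have hIg2 : IntegrableOn (fun x => a x * ‖ψ' x‖ ^ 2) (Ioc τ 1) := hL2.mono_set hsub
    have hmψ' : AEStronglyMeasurable ψ' μ := (hψ'int.mono_set hsub).aestronglyMeasurable
    have hcsa : ContinuousOn (fun x => Real.sqrt (a x)) (Ioc τ 1) :=
      Real.continuous_sqrt.comp_continuousOn (hca.mono hsub)
    have hcf : ContinuousOn f (Ioc τ 1) :=
      hcsa.inv₀ fun t ht => (Real.sqrt_pos.mpr (hpos t (hsub ht))).ne'
    have hmf : AEStronglyMeasurable f μ := hcf.aestronglyMeasurable measurableSet_Ioc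
    have hmg : AEStronglyMeasurable g μ :=
      (hcsa.aestronglyMeasurable measurableSet_Ioc).mul hmψ'.norm
    have hfg2 : ∀ x ∈ Ioc τ 1, f x ^ 2 = (a x)⁻¹ := by
      intro x hx
      simp only [hf, inv_pow, Real.sq_sqrt (hpos x (hsub hx)).le]
    have hgg2 : ∀ x ∈ Ioc τ 1, g x ^ 2 = a x * ‖ψ' x‖ ^ 2 := by
      intro x hx
      simp only [hgdef, mul_pow, Real.sq_sqrt (hpos x (hsub hx)).le]
    have hf2 : Integrable (fun x => f x ^ 2) μ :=
      hIa.congr_fun (fun x hx => (hfg2 x hx).symm) measurableSet_Ioc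
    have hg2 : Integrable (fun x => g x ^ 2) μ :=
      hIg2.congr_fun (fun x hx => (hgg2 x hx).symm) measurableSet_Ioc
    have h2 : ENNReal.ofReal (2:ℝ) = 2 := by norm_num
    have hMf : MemLp f (ENNReal.ofReal 2) μ := by
      rw [h2]; exact (memLp_two_iff_integrable_sq hmf).mpr hf2
    have hMg : MemLp g (ENNReal.ofReal 2) μ := by
      rw [h2]; exact (memLp_two_iff_integrable_sq hmg).mpr hg2
    have hconj : Real.HolderConjugate 2 2 := Real.HolderConjugate.two_two
    have hCS := integral_mul_le_Lp_mul_Lq_of_nonneg hconj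
      (ae_of_all μ fun x => by positivity) (ae_of_all μ fun x => by positivity) hMf hMg
    simp only [Real.rpow_two] at hCS
    -- the three integrals
    have hA0 : 0 ≤ ∫ x, f x ^ 2 ∂μ := integral_nonneg fun x => by positivity
    have hB0 : 0 ≤ ∫ x, g x ^ 2 ∂μ := integral_nonneg fun x => by positivity
    have hfg : ∀ x ∈ Ioc τ 1, f x * g x = ‖ψ' x‖ := by
      intro x hx
      have := (Real.sqrt_pos.mpr (hpos x (hsub hx))).ne'
      simp only [hf, hgdef]
      exact inv_mul_cancel_left₀ this _
    -- ‖ψ τ‖ ≤ ∫ fg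
    have hstep1 : ‖ψ τ‖ ≤ ∫ x, f x * g x ∂μ := by
      rw [hrep τ hτ, norm_neg]
      calc ‖∫ x in τ..1, ψ' x‖ ≤ ∫ x in τ..1, ‖ψ' x‖ :=
            intervalIntegral.norm_integral_le_integral_norm hτ1
        _ = ∫ x in Ioc τ 1, ‖ψ' x‖ := intervalIntegral.integral_of_le hτ1
        _ = ∫ x, f x * g x ∂μ :=
            (setIntegral_congr_fun measurableSet_Ioc fun x hx => (hfg x hx).symm)
    -- bound A
    have hrint : IntegrableOn (fun x => x ^ (-α) / a 1) (Ioc τ 1) :=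
      (intervalIntegrable_rpow' (a := τ) (b := 1) (by linarith : (-1:ℝ) < -α)).1.div_const _
    have hA : ∫ x, f x ^ 2 ∂μ ≤ (1 - τ ^ (1-α)) * ((1-α) * a 1)⁻¹ := by
      have e1 : ∫ x, f x ^ 2 ∂μ = ∫ x in Ioc τ 1, (a x)⁻¹ :=
        setIntegral_congr_fun measurableSet_Ioc hfg2
      have e2 : ∫ x in Ioc τ 1, (a x)⁻¹ ≤ ∫ x in Ioc τ 1, x ^ (-α) / a 1 := by
        refine setIntegral_mono_on hIa hrint measurableSet_Ioc ?_
        intro x hx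
        have hx' := hsub hx
        have h1 : a 1 * x ^ α ≤ a x := hlow x hx'
        have h2 : 0 < a 1 * x ^ α := mul_pos ha1 (Real.rpow_pos_of_pos hx'.1 α)
        calc (a x)⁻¹ ≤ (a 1 * x ^ α)⁻¹ := by
              exact inv_anti₀ h2 h1
          _ = x ^ (-α) / a 1 := by
              rw [Real.rpow_neg hx'.1.le, div_eq_mul_inv, mul_inv,
                inv_eq_one_div, inv_eq_one_div]
              ring
        -- done
      have e3 : ∫ x in Ioc τ 1, x ^ (-α) / a 1 = (1 - τ ^ (1-α)) * ((1-α) * a 1)⁻¹ := by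
        rw [← intervalIntegral.integral_of_le hτ1, intervalIntegral.integral_div,
          integral_rpow (Or.inl (by linarith : (-1:ℝ) < -α))]
        rw [show -α + 1 = 1 - α by ring, Real.one_rpow]
        field_simp
      rw [e1, ← e3]; exact e2
    -- bound B
    have hB : ∫ x, g x ^ 2 ∂μ ≤ E := by
      have e1 : ∫ x, g x ^ 2 ∂μ = ∫ x in Ioc τ 1, a x * ‖ψ' x‖ ^ 2 :=
        setIntegral_congr_fun measurableSet_Ioc hgg2
      rw [e1, hE]
      refine setIntegral_mono_set hL2 ?_ (HasSubset.Subset.eventuallyLE hsub)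
      refine (ae_restrict_iff' measurableSet_Ioc).mpr (ae_of_all _ fun x hx => ?_)
      exact mul_nonneg (hpos x hx).le (by positivity)
    -- combine
    have hbnd0 : 0 ≤ (1 - τ ^ (1-α)) * ((1-α) * a 1)⁻¹ := by
      have : τ ^ (1-α) ≤ 1 := Real.rpow_le_one hτ.1.le hτ1 h1α.le
      have : 0 ≤ 1 - τ ^ (1-α) := by linarith
      positivity
    calc ‖ψ τ‖ ^ 2 ≤ (∫ x, f x * g x ∂μ) ^ 2 := by
          exact pow_le_pow_left₀ (norm_nonneg _) hstep1 2
      _ ≤ ((∫ x, f x ^ 2 ∂μ) ^ ((1:ℝ)/2) * (∫ x, g x ^ 2 ∂μ) ^ ((1:ℝ)/2)) ^ 2 := by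
          refine pow_le_pow_left₀ (MeasureTheory.integral_nonneg fun x => by positivity) hCS 2
      _ = (∫ x, f x ^ 2 ∂μ) * (∫ x, g x ^ 2 ∂μ) := by
          rw [← Real.sqrt_eq_rpow, ← Real.sqrt_eq_rpow, mul_pow,
            Real.sq_sqrt hA0, Real.sq_sqrt hB0]
      _ ≤ ((1 - τ ^ (1-α)) * ((1-α) * a 1)⁻¹) * E :=
          mul_le_mul hA hB hB0 hbnd0
  -- integrate the pointwise bound
  have hcψ : ContinuousOn ψ (Ioo (0:ℝ) 1) :=
    fun t ht => ((hderiv t ht).continuousAt).continuousWithinAt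
  have hmψ : AEStronglyMeasurable (fun τ => ‖ψ τ‖ ^ 2) (volume.restrict (Ioo (0:ℝ) 1)) := by
    exact ((hcψ.aestronglyMeasurable measurableSet_Ioo).norm.pow 2)
  have hψint : IntegrableOn (fun τ => ‖ψ τ‖ ^ 2) (Ioo (0:ℝ) 1) := by
    refine Integrable.mono' (integrable_const (((1-α) * a 1)⁻¹ * E)) hmψ ?_
    refine (ae_restrict_iff' measurableSet_Ioo).mpr (ae_of_all _ fun τ hτ => ?_)
    have h1 := key τ hτ
    have h2 : 0 ≤ τ ^ (1-α) := Real.rpow_nonneg hτ.1.le _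
    have h3 : ((1-α) * a 1)⁻¹ * E * (1 - τ ^ (1-α)) ≤ ((1-α) * a 1)⁻¹ * E * 1 := by
      refine mul_le_mul_of_nonneg_left (by linarith) (by positivity)
    rw [Real.norm_of_nonneg (by positivity)]
    nlinarith
  have hCcont : Continuous (fun τ : ℝ => (1 - τ ^ (1-α)) * ((1-α) * a 1)⁻¹ * E) := by
    refine ((continuous_const.sub ?_).mul continuous_const).mul continuous_const
    exact continuous_id.rpow_const fun x => Or.inr h1α.le
  have hCint : IntegrableOn (fun τ : ℝ => (1 - τ ^ (1-α)) * ((1-α) * a 1)⁻¹ * E)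
      (Ioo (0:ℝ) 1) := (hCcont.integrableOn_Icc (a := 0) (b := 1)).mono_set Ioo_subset_Icc_self
  rw [MeasureTheory.integral_Ioc_eq_integral_Ioo]
  have hmono : ∫ τ in Ioo (0:ℝ) 1, ‖ψ τ‖ ^ 2
      ≤ ∫ τ in Ioo (0:ℝ) 1, (1 - τ ^ (1-α)) * ((1-α) * a 1)⁻¹ * E :=
    setIntegral_mono_on hψint hCint measurableSet_Ioo key
  refine hmono.trans ?_
  have hval : ∫ τ in Ioo (0:ℝ) 1, (1 - τ ^ (1-α)) * ((1-α) * a 1)⁻¹ * E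
      = (1 / (a 1 * (2 - α))) * E := by
    rw [← MeasureTheory.integral_Ioc_eq_integral_Ioo,
      ← intervalIntegral.integral_of_le zero_le_one]
    have hint1 : IntervalIntegrable (fun τ : ℝ => τ ^ (1-α)) volume 0 1 :=
      intervalIntegrable_rpow' (by linarith)
    have : ∫ τ in (0:ℝ)..1, (1 - τ ^ (1-α)) * ((1-α) * a 1)⁻¹ * E
        = (∫ τ in (0:ℝ)..1, (1 - τ ^ (1-α))) * (((1-α) * a 1)⁻¹ * E) := by
      rw [← intervalIntegral.integral_mul_const]
      congr 1; ext τ; ring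
    rw [this, intervalIntegral.integral_sub intervalIntegrable_const hint1,
      integral_rpow (Or.inl (by linarith : (-1:ℝ) < 1-α))]
    have hne : 1 - α + 1 ≠ 0 := by linarith
    rw [Real.one_rpow, Real.zero_rpow hne]
    simp only [intervalIntegral.integral_const, smul_eq_mul, mul_one, sub_zero]
    field_simp
    ring
  rw [hval]
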